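/- Let B be a nondegenerate alternating bilinear form on a finite-dimensional complex vector space V, and let P be nilpotent, self-adjoint with respect to B, with dim ker P^k = 2·Σ_{j=1}^N min(k, n_j) for every k ≥ 0, where n_1 ≥ n_2 ≥ … ≥ n_N ≥ 1 (so (V, B, P) is the direct sum of Jordan blocks J_{0,2n_1}, …, J_{0,2n_N}). Let g be the Lie algebra of the automorphism group, g = {C : V → V linear | C ∘ P = P ∘ C and B(C u, v) + B(u, C v) = 0 for all u, v}. Then dim g = Σ_{j=1}^N (4j − 1)·n_j. -/

import Mathlib

open Module

/-- The Lie algebra of the automorphism group of `(V, B, P)`: linear endomorphisms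
commuting with `P` and infinitesimally preserving `B`. -/
def autAlg {V : Type*} [AddCommGroup V] [Module ℂ V]
    (B : V →ₗ[ℂ] V →ₗ[ℂ] ℂ) (P : V →ₗ[ℂ] V) : Submodule ℂ (V →ₗ[ℂ] V) where
  carrier := {C | (∀ v, C (P v) = P (C v)) ∧ ∀ u v, B (C u) v + B u (C v) = 0}
  add_mem' := by
    rintro C D ⟨hC1, hC2⟩ ⟨hD1, hD2⟩
    refine ⟨fun v => ?_, fun u v => ?_⟩
    · simp [hC1 v, hD1 v]
    · have h1 := hC2 u v
      have h2 := hD2 u v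
      simp only [LinearMap.add_apply, map_add]
      linear_combination h1 + h2
  zero_mem' := by
    refine ⟨fun v => ?_, fun u v => ?_⟩ <;> simp
  smul_mem' := by
    rintro c C ⟨hC1, hC2⟩
    refine ⟨fun v => ?_, fun u v => ?_⟩
    · simp [hC1 v]
    · have h := hC2 u v
      simp only [LinearMap.smul_apply, map_smul, smul_eq_mul]
      linear_combination c * h

open Module LinearMap Submodule


universe u

variable {V : Type u} [AddCommGroup V] [Module ℂ V]

/-- Symmetric `P`-invariant bilinear forms. -/
noncomputable def SInvForms (P : V →ₗ[ℂ] V) : Submodule ℂ (V →ₗ[ℂ] V →ₗ[ℂ] ℂ) where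
  carrier := {Φ | (∀ u v, Φ u v = Φ v u) ∧ ∀ u v, Φ (P u) v = Φ u (P v)}
  add_mem' := by
    rintro Φ Ψ ⟨h1, h2⟩ ⟨h3, h4⟩
    exact ⟨fun u v => by simp [h1 u v, h3 u v], fun u v => by simp [h2 u v, h4 u v]⟩
  zero_mem' := ⟨fun u v => by simp, fun u v => by simp⟩
  smul_mem' := by
    rintro c Φ ⟨h1, h2⟩
    exact ⟨fun u v => by simp [h1 u v], fun u v => by simp [h2 u v]⟩

/-- Symmetric bilinear forms. -/
noncomputable def SymForms (W : Type*) [AddCommGroup W] [Module ℂ W] :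
    Submodule ℂ (W →ₗ[ℂ] W →ₗ[ℂ] ℂ) where
  carrier := {Φ | ∀ u v, Φ u v = Φ v u}
  add_mem' := by
    intro Φ Ψ h1 h3
    exact fun u v => by simp [h1 u v, h3 u v]
  zero_mem' := fun u v => by simp
  smul_mem' := by
    intro c Φ h1
    exact fun u v => by simp [h1 u v]

lemma card_le_pairs (c : ℕ) :
    Fintype.card {p : Fin c × Fin c // p.1 ≤ p.2} = c * (c + 1) / 2 := by
  rw [← Fintype.card_congr (Sym2.sortEquiv (α := Fin c)), Sym2.card]
  simp [Nat.choose_two_right, Fintype.card_fin, Nat.mul_comm]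

lemma finrank_symForms (W : Type*) [AddCommGroup W] [Module ℂ W] [FiniteDimensional ℂ W] :
    finrank ℂ (SymForms W) = finrank ℂ W * (finrank ℂ W + 1) / 2 := by
  classical
  set c := finrank ℂ W with hc
  let b : Basis (Fin c) ℂ W := finBasis ℂ W
  let ev : SymForms W →ₗ[ℂ] ({p : Fin c × Fin c // p.1 ≤ p.2} → ℂ) :=
    { toFun := fun Φ => fun s => Φ.1 (b s.1.1) (b s.1.2)
      map_add' := by intro Φ Ψ; funext s; simp
      map_smul' := by intro a Φ; funext s; simp }
  have hbij : Function.Bijective ev := by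
    constructor
    · intro Φ Ψ h
      have key : ∀ i j : Fin c, Φ.1 (b i) (b j) = Ψ.1 (b i) (b j) := by
        intro i j
        rcases le_total i j with hij | hij
        · exact congrFun h ⟨(i, j), hij⟩
        · rw [Φ.2 (b i) (b j), Ψ.2 (b i) (b j)]
          exact congrFun h ⟨(j, i), hij⟩
      apply Subtype.ext
      exact b.ext fun i => b.ext fun j => key i j
    · intro f
      set g : Fin c → Fin c → ℂ := fun i j =>
        if h : i ≤ j then f ⟨(i, j), h⟩ else f ⟨(j, i), le_of_not_ge h⟩ with hg
      have gsym : ∀ i j, g i j = g j i := by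
        intro i j
        by_cases h1 : i ≤ j <;> by_cases h2 : j ≤ i
        · have : i = j := le_antisymm h1 h2; subst this; rfl
        · simp only [hg]; rw [dif_pos h1, dif_neg h2]
        · simp only [hg]; rw [dif_neg h1, dif_pos h2]
        · exact absurd (le_total i j) (by simp [h1, h2])
      set Φg : W →ₗ[ℂ] W →ₗ[ℂ] ℂ :=
        ∑ i : Fin c, ∑ j : Fin c, g i j • ((b.coord i).smulRight (b.coord j)) with hPhig
      have heval : ∀ k l : Fin c, Φg (b k) (b l) = g k l := by
        intro k l
        simp only [hPhig, LinearMap.sum_apply, LinearMap.smul_apply, LinearMap.smulRight_apply,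
          Basis.coord_apply, Basis.repr_self, Finsupp.single_apply, smul_eq_mul, mul_ite, ite_mul,
          one_mul, zero_mul, mul_one, mul_zero, Finset.sum_ite_eq, Finset.mem_univ, if_true]
      have hsym : ∀ u v, Φg u v = Φg v u := by
        have hfl : Φg.flip = Φg :=
          b.ext fun i => b.ext fun j => by
            simp only [LinearMap.flip_apply]
            rw [heval, heval, gsym]
        intro u v
        conv_rhs => rw [← hfl]
        rfl
      refine ⟨⟨Φg, hsym⟩, ?_⟩
      funext s
      obtain ⟨⟨i, j⟩, hij⟩ := s
      show Φg (b i) (b j) = _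
      rw [heval]
      simp only [hg, dif_pos hij]
  rw [← card_le_pairs c, ← Module.finrank_fintype_fun_eq_card ℂ]
  exact (LinearEquiv.ofBijective ev hbij).finrank_eq

/-- `P` restricted to its range. -/
noncomputable def Pres (P : V →ₗ[ℂ] V) : ↥(range P) →ₗ[ℂ] ↥(range P) :=
  P.restrict (fun x _ => LinearMap.mem_range_self P x)

lemma pres_coe (P : V →ₗ[ℂ] V) (x : ↥(range P)) : (Pres P x : V) = P x :=
  LinearMap.restrict_coe_apply _ _ _

lemma pres_pow_coe (P : V →ₗ[ℂ] V) (k : ℕ) (x : ↥(range P)) :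
    ((Pres P ^ k) x : V) = (P ^ k) x := by
  rw [Pres, Module.End.pow_restrict, LinearMap.restrict_coe_apply]

lemma pres_pow_zero (P : V →ₗ[ℂ] V) (m : ℕ) (hm : P ^ (m + 1) = 0) : Pres P ^ m = 0 := by
  ext x
  have hx := x.2
  obtain ⟨y, hy⟩ := hx
  have : ((Pres P ^ m) x : V) = 0 := by
    rw [pres_pow_coe, ← hy, ← Module.End.mul_apply, ← pow_succ, hm, LinearMap.zero_apply]
  simpa using this

lemma ker_pres_finrank [FiniteDimensional ℂ V] (P : V →ₗ[ℂ] V) (k : ℕ) :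
    finrank ℂ (ker (Pres P ^ k)) + finrank ℂ (ker P) = finrank ℂ (ker (P ^ (k + 1))) := by
  have hco : ker (Pres P ^ k) = comap (range P).subtype (ker (P ^ k) ⊓ range P) := by
    ext x
    simp only [LinearMap.mem_ker, Submodule.mem_comap, Submodule.coe_subtype,
      Submodule.mem_inf]
    constructor
    · intro h
      refine ⟨?_, x.2⟩
      have : ((Pres P ^ k) x : V) = 0 := by rw [h]; rfl
      rwa [pres_pow_coe] at this
    · intro h
      have : ((Pres P ^ k) x : V) = 0 := by rw [pres_pow_coe]; exact h.1
      exact Subtype.ext this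
  have e1 : finrank ℂ (ker (Pres P ^ k)) = finrank ℂ (ker (P ^ k) ⊓ range P : Submodule ℂ V) := by
    rw [hco]
    exact (Submodule.comapSubtypeEquivOfLe inf_le_right).finrank_eq
  set f := P.domRestrict (ker (P ^ (k + 1))) with hf
  have hrange : range f = ker (P ^ k) ⊓ range P := by
    rw [hf, LinearMap.range_domRestrict]
    ext y
    simp only [Submodule.mem_map, LinearMap.mem_ker, Submodule.mem_inf, LinearMap.mem_range]
    constructor
    · rintro ⟨x, hx, rfl⟩
      exact ⟨by rw [← Module.End.mul_apply, ← pow_succ]; exact hx, ⟨x, rfl⟩⟩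
    · rintro ⟨hky, x, rfl⟩
      exact ⟨x, by rw [pow_succ, Module.End.mul_apply]; exact hky, rfl⟩
  have hkerf : ker f = comap (ker (P ^ (k + 1))).subtype (ker P) := by
    rw [hf, LinearMap.ker_domRestrict]
  have hle : ker P ≤ ker (P ^ (k + 1)) := by
    intro x hx
    simp only [LinearMap.mem_ker] at hx ⊢
    rw [pow_succ, Module.End.mul_apply, hx, map_zero]
  have e2 : finrank ℂ (ker f) = finrank ℂ (ker P) := by
    rw [hkerf]
    exact (Submodule.comapSubtypeEquivOfLe hle).finrank_eq
  have e3 := LinearMap.finrank_range_add_finrank_ker f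
  rw [hrange, e2] at e3
  rw [e1]
  exact e3

/-- Restriction of a bilinear form along two linear maps, as a bundled linear map. -/
noncomputable def formPull {V W : Type*} [AddCommGroup V] [Module ℂ V] [AddCommGroup W]
    [Module ℂ W] (f g : W →ₗ[ℂ] V) :
    (V →ₗ[ℂ] V →ₗ[ℂ] ℂ) →ₗ[ℂ] (W →ₗ[ℂ] W →ₗ[ℂ] ℂ) where
  toFun Φ := Φ.compl₁₂ f g
  map_add' Φ Ψ := by ext u v; simp [LinearMap.compl₁₂_apply]
  map_smul' c Φ := by ext u v; simp [LinearMap.compl₁₂_apply]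

@[simp] lemma formPull_apply {V W : Type*} [AddCommGroup V] [Module ℂ V] [AddCommGroup W]
    [Module ℂ W] (f g : W →ₗ[ℂ] V) (Φ : V →ₗ[ℂ] V →ₗ[ℂ] ℂ) (u v : W) :
    formPull f g Φ u v = Φ (f u) (g v) := rfl

/-- Descend a bilinear form killing `range P` on both sides to the quotient. -/
lemma form_descend (P : V →ₗ[ℂ] V) (Φ : V →ₗ[ℂ] V →ₗ[ℂ] ℂ)
    (hP1 : ∀ u v, Φ (P u) v = 0) (hP2 : ∀ u v, Φ u (P v) = 0) :
    ∃ Ψ : (V ⧸ range P) →ₗ[ℂ] (V ⧸ range P) →ₗ[ℂ] ℂ,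
      ∀ u v : V, Ψ ((range P).mkQ u) ((range P).mkQ v) = Φ u v := by
  have hker2 : ∀ u : V, range P ≤ ker (Φ u) := by
    rintro u x ⟨w, rfl⟩
    exact hP2 u w
  refine ⟨(range P).liftQ
    { toFun := fun u => (range P).liftQ (Φ u) (hker2 u)
      map_add' := fun u v => by
        apply Submodule.linearMap_qext
        ext w
        simp
      map_smul' := fun c u => by
        apply Submodule.linearMap_qext
        ext w
        simp } ?_, fun u v => rfl⟩
  rintro x ⟨w, rfl⟩
  rw [LinearMap.mem_ker]
  apply Submodule.linearMap_qext
  ext v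
  exact hP1 w v

set_option maxHeartbeats 1000000 in
set_option synthInstance.maxHeartbeats 200000 in
lemma rec_step [FiniteDimensional ℂ V] (P : V →ₗ[ℂ] V) :
    finrank ℂ (SInvForms P) =
      finrank ℂ (ker P) * (finrank ℂ (ker P) + 1) / 2 + finrank ℂ (SInvForms (Pres P)) := by
  classical
  set ρ := P.rangeRestrict with hρ
  have coe_rr : ∀ u : V, (ρ u : V) = P u := fun u => rfl
  obtain ⟨σ, hσ⟩ := ρ.exists_rightInverse_of_surjective (LinearMap.range_rangeRestrict P)
  have fσ : ∀ b : ↥(range P), ρ (σ b) = b := fun b => by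
    have := LinearMap.ext_iff.1 hσ b
    simpa using this
  have hσ' : ∀ b : ↥(range P), P (σ b) = ↑b := fun b => by
    rw [← coe_rr, fσ]
  obtain ⟨q, hq⟩ := (range P).subtype.exists_leftInverse_of_injective (range P).ker_subtype
  have hq' : ∀ a : ↥(range P), q ↑a = a := fun a => by
    have := LinearMap.ext_iff.1 hq a
    simpa using this
  have fq : ∀ u : V, q (P u) = ρ u := fun u => by rw [← coe_rr u]; exact hq' (ρ u)
  have fρ : ∀ u : V, ρ (P u) = Pres P (ρ u) := fun u =>
    Subtype.ext (by rw [coe_rr, pres_coe, coe_rr])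
  have fcoe : ∀ a : ↥(range P), ρ ↑a = Pres P a := fun a =>
    Subtype.ext (by rw [coe_rr, pres_coe])
  have hmem : ∀ Φ : ↥(SInvForms P),
      formPull (range P).subtype σ ↑Φ ∈ SInvForms (Pres P) := by
    intro Φ
    obtain ⟨hs, hi⟩ := Φ.2
    have h1 : ∀ a b : ↥(range P), (Φ : V →ₗ[ℂ] V →ₗ[ℂ] ℂ) ↑a (σ b)
        = (Φ : V →ₗ[ℂ] V →ₗ[ℂ] ℂ) (σ a) ↑b := by
      intro a b
      conv_lhs => rw [← hσ' a]
      rw [hi, hσ' b]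
    constructor
    · intro a b
      simp only [formPull_apply, Submodule.subtype_apply]
      rw [h1 a b]
      exact hs _ _
    · intro a b
      simp only [formPull_apply, Submodule.subtype_apply]
      rw [pres_coe, hi, hσ' b]
      obtain ⟨u, hu⟩ := a.2
      conv_rhs => rw [← hu]
      rw [hi u, hσ', pres_coe, ← hi, hu]
  set π : ↥(SInvForms P) →ₗ[ℂ] ↥(SInvForms (Pres P)) :=
    LinearMap.codRestrict (SInvForms (Pres P))
      ((formPull (range P).subtype σ) ∘ₗ (SInvForms P).subtype) hmem with hπ
  have π_coe : ∀ Φ : ↥(SInvForms P),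
      ((π Φ : ↥(SInvForms (Pres P))) : ↥(range P) →ₗ[ℂ] ↥(range P) →ₗ[ℂ] ℂ)
        = formPull (range P).subtype σ ↑Φ := fun Φ => rfl
  -- surjectivity of π
  have hπsurj : Function.Surjective π := by
    rintro ⟨Ψ, hs, hi⟩
    set Φdef : V →ₗ[ℂ] V →ₗ[ℂ] ℂ :=
      formPull q ρ Ψ + formPull ρ q Ψ - formPull (Pres P ∘ₗ q) q Ψ with hΦdef
    have Φdef_apply : ∀ u v : V,
        Φdef u v = Ψ (q u) (ρ v) + Ψ (ρ u) (q v) - Ψ (Pres P (q u)) (q v) := fun u v => rfl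
    have hmemΦ : Φdef ∈ SInvForms P := by
      constructor
      · intro u v
        rw [Φdef_apply, Φdef_apply, hi (q u) (q v), hs (q u) (Pres P (q v)),
          hs (q u) (ρ v), hs (ρ u) (q v)]
        ring
      · intro u v
        rw [Φdef_apply, Φdef_apply, fq u, fρ u, fρ v, fq v, ← hi (q u) (ρ v)]
        ring
    refine ⟨⟨Φdef, hmemΦ⟩, ?_⟩
    apply Subtype.ext
    rw [π_coe]
    ext a b
    simp only [formPull_apply, Submodule.subtype_apply]
    show Φdef ↑a (σ b) = Ψ a b
    rw [Φdef_apply, hq' a, fσ b, fcoe a]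
    exact add_sub_cancel_right _ _
  -- kernel of π: symmetric forms on the quotient
  have mk_zero : ∀ u : V, (range P).mkQ (P u) = 0 := fun u => by
    rw [Submodule.mkQ_apply, Submodule.Quotient.mk_eq_zero]
    exact LinearMap.mem_range_self P u
  have mk_zero' : ∀ a : ↥(range P), (range P).mkQ ↑a = 0 := fun a => by
    rw [Submodule.mkQ_apply, Submodule.Quotient.mk_eq_zero]
    exact a.2
  have hθmem : ∀ Ψ : ↥(SymForms (V ⧸ range P)),
      formPull (range P).mkQ (range P).mkQ ↑Ψ ∈ SInvForms P := by
    intro Ψ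
    constructor
    · intro u v
      simp only [formPull_apply]
      exact Ψ.2 _ _
    · intro u v
      simp only [formPull_apply, mk_zero u, mk_zero v]
      simp
  have hθker : ∀ Ψ : ↥(SymForms (V ⧸ range P)),
      (⟨formPull (range P).mkQ (range P).mkQ ↑Ψ, hθmem Ψ⟩ : ↥(SInvForms P)) ∈ ker π := by
    intro Ψ
    rw [LinearMap.mem_ker]
    apply Subtype.ext
    rw [π_coe]
    ext a b
    simp only [formPull_apply, Submodule.subtype_apply, mk_zero' a]
    simp
  set θ : ↥(SymForms (V ⧸ range P)) →ₗ[ℂ] ↥(SInvForms P) :=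
    LinearMap.codRestrict (SInvForms P)
      ((formPull (range P).mkQ (range P).mkQ) ∘ₗ (SymForms (V ⧸ range P)).subtype)
      (fun Ψ => hθmem Ψ) with hθ
  have θ_coe : ∀ Ψ : ↥(SymForms (V ⧸ range P)),
      ((θ Ψ : ↥(SInvForms P)) : V →ₗ[ℂ] V →ₗ[ℂ] ℂ)
        = formPull (range P).mkQ (range P).mkQ ↑Ψ := fun Ψ => rfl
  have hθinj : Function.Injective θ := by
    intro Φ Ψ h
    have key : ∀ u v : V, (Φ : (V ⧸ range P) →ₗ[ℂ] (V ⧸ range P) →ₗ[ℂ] ℂ)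
        ((range P).mkQ u) ((range P).mkQ v)
        = (Ψ : (V ⧸ range P) →ₗ[ℂ] (V ⧸ range P) →ₗ[ℂ] ℂ)
        ((range P).mkQ u) ((range P).mkQ v) := by
      intro u v
      have := congrArg (fun z : ↥(SInvForms P) =>
        ((z : V →ₗ[ℂ] V →ₗ[ℂ] ℂ)) u v) h
      exact this
    apply Subtype.ext
    apply Submodule.linearMap_qext
    apply LinearMap.ext
    intro u
    apply Submodule.linearMap_qext
    apply LinearMap.ext
    intro v
    exact key u v
  have hθrange : LinearMap.range θ = ker π := by
    apply le_antisymm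
    · rintro _ ⟨Ψ, rfl⟩
      rw [LinearMap.mem_ker]
      apply Subtype.ext
      rw [π_coe]
      ext a b
      simp only [formPull_apply, Submodule.subtype_apply, θ_coe, mk_zero' a]
      simp
    · rintro ⟨Φ, hs, hi⟩ hker
      rw [LinearMap.mem_ker] at hker
      have h0 : ∀ (a b : ↥(range P)), Φ ↑a (σ b) = 0 := by
        intro a b
        have h2 := congrArg (fun z : ↥(SInvForms (Pres P)) =>
          (z : ↥(range P) →ₗ[ℂ] ↥(range P) →ₗ[ℂ] ℂ) a b) hker
        simp only [π_coe] at h2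
        simpa using h2
      have hP1 : ∀ u v : V, Φ (P u) v = 0 := by
        intro u v
        have hsplit : Φ (P u) v
            = Φ (P u) (σ (ρ v)) + Φ (P u) (v - σ (ρ v)) := by
          rw [← map_add, add_sub_cancel]
        have t1 : Φ (P u) (σ (ρ v)) = 0 := by
          have := h0 (ρ u) (ρ v)
          rwa [coe_rr] at this
        have t2 : Φ (P u) (v - σ (ρ v)) = 0 := by
          rw [hi]
          have hz : P (v - σ (ρ v)) = 0 := by
            rw [map_sub, hσ' (ρ v), coe_rr, sub_self]
          rw [hz, map_zero]
        rw [hsplit, t1, t2, add_zero]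
      have hP2 : ∀ u v : V, Φ u (P v) = 0 := by
        intro u v
        rw [← hi]
        exact hP1 u v
      obtain ⟨Ψ0, hΨ0⟩ := form_descend P Φ hP1 hP2
      have hΨ0sym : Ψ0 ∈ SymForms (V ⧸ range P) := by
        intro x y
        obtain ⟨u, rfl⟩ := (range P).mkQ_surjective x
        obtain ⟨v, rfl⟩ := (range P).mkQ_surjective y
        rw [hΨ0, hΨ0, hs]
      refine ⟨⟨Ψ0, hΨ0sym⟩, ?_⟩
      apply Subtype.ext
      rw [θ_coe]
      show formPull (range P).mkQ (range P).mkQ Ψ0 = Φ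
      ext u v
      simp only [formPull_apply]
      exact hΨ0 u v
  have hrθ := LinearMap.finrank_range_of_inj (R := ℂ)
    (M := ↥(SymForms (V ⧸ range P))) (N := ↥(SInvForms P)) hθinj
  rw [hθrange] at hrθ
  have hrn := LinearMap.finrank_range_add_finrank_ker (K := ℂ)
    (V := ↥(SInvForms P)) (V₂ := ↥(SInvForms (Pres P))) π
  rw [LinearMap.range_eq_top.2 hπsurj, finrank_top ℂ ↥(SInvForms (Pres P)), hrθ] at hrn
  have hQdim : finrank ℂ (V ⧸ range P) = finrank ℂ (ker P) := by
    have h1 := Submodule.finrank_quotient_add_finrank (range P)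
    have h2 := LinearMap.finrank_range_add_finrank_ker P
    omega
  rw [finrank_symForms, hQdim] at hrn
  omega

/-- `c (c+1) / 2`. -/
def Tf (c : ℕ) : ℕ := c * (c + 1) / 2

theorem dim_sinv (m : ℕ) :
    ∀ {W : Type u} [AddCommGroup W] [Module ℂ W] [FiniteDimensional ℂ W]
      (P : W →ₗ[ℂ] W), P ^ m = 0 →
      finrank ℂ (SInvForms P) =
        ∑ k ∈ Finset.range m,
          Tf (finrank ℂ (ker (P ^ (k + 1))) - finrank ℂ (ker (P ^ k))) := by
  induction m with
  | zero =>
    intro W _ _ _ P h0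
    have hv : ∀ v : W, v = 0 := fun v => by
      have := LinearMap.ext_iff.1 h0 v
      simpa using this
    haveI : Subsingleton (W →ₗ[ℂ] W →ₗ[ℂ] ℂ) :=
      ⟨fun f g => LinearMap.ext fun u => by rw [hv u, map_zero, map_zero]⟩
    rw [Finset.range_zero, Finset.sum_empty]
    exact Module.finrank_zero_of_subsingleton
  | succ m ih =>
    intro W _ _ _ P hP
    rw [rec_step P]
    have hPres : Pres P ^ m = 0 := pres_pow_zero P m hP
    rw [ih (Pres P) hPres]
    have key := ker_pres_finrank P
    have hsum : ∑ k ∈ Finset.range m,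
        Tf (finrank ℂ (ker (Pres P ^ (k + 1))) - finrank ℂ (ker (Pres P ^ k)))
        = ∑ k ∈ Finset.range m,
          Tf (finrank ℂ (ker (P ^ (k + 1 + 1))) - finrank ℂ (ker (P ^ (k + 1)))) := by
      refine Finset.sum_congr rfl fun k _ => ?_
      have h1 := key k
      have h2 := key (k + 1)
      congr 1
      omega
    rw [hsum, Finset.sum_range_succ']
    have hd0 : finrank ℂ (ker (P ^ 0)) = 0 := by
      rw [pow_zero, Module.End.one_eq_id, LinearMap.ker_id]
      exact finrank_bot ℂ W
    have hd1 : finrank ℂ (ker (P ^ (0 + 1))) = finrank ℂ (ker P) := by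
      rw [show (0 : ℕ) + 1 = 1 from rfl, pow_one]
    rw [hd0, hd1, Nat.sub_zero]
    show Tf (finrank ℂ (ker P)) + _ = _
    omega

lemma finrank_autAlg_eq [FiniteDimensional ℂ V] (B : V →ₗ[ℂ] V →ₗ[ℂ] ℂ)
    (hBalt : ∀ v, B v v = 0)
    (hBnd : ∀ v, (∀ u, B v u = 0) → v = 0)
    (P : V →ₗ[ℂ] V)
    (hPsa : ∀ u v, B (P u) v = B u (P v)) :
    finrank ℂ (autAlg B P) = finrank ℂ (SInvForms P) := by
  classical
  have hskew : ∀ u v, B u v = -B v u := by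
    intro u v
    have h := hBalt (u + v)
    simp only [map_add, LinearMap.add_apply, hBalt u, hBalt v] at h
    linear_combination h
  have hBinj : Function.Injective B := by
    intro u v h
    have hz : ∀ w, B (u - v) w = 0 := fun w => by
      rw [map_sub, LinearMap.sub_apply, h, sub_self]
    have := hBnd _ hz
    exact sub_eq_zero.1 this
  have hBsurj : Function.Surjective B :=
    (LinearMap.injective_iff_surjective_of_finrank_eq_finrank
      (Subspace.dual_finrank_eq (K := ℂ) (V := V)).symm).1 hBinj
  set e : V ≃ₗ[ℂ] (V →ₗ[ℂ] ℂ) := LinearEquiv.ofBijective B ⟨hBinj, hBsurj⟩ with he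
  have he_app : ∀ u, e u = B u := fun u => rfl
  have hmem : ∀ C : ↥(autAlg B P), B ∘ₗ (C : V →ₗ[ℂ] V) ∈ SInvForms P := by
    intro C
    obtain ⟨hc, hsk⟩ := C.2
    constructor
    · intro u v
      simp only [LinearMap.comp_apply]
      have h1 := hsk u v
      have h2 := hskew u ((C : V →ₗ[ℂ] V) v)
      linear_combination h1 - h2
    · intro u v
      simp only [LinearMap.comp_apply]
      rw [hc u, hPsa]
  set T : ↥(autAlg B P) →ₗ[ℂ] ↥(SInvForms P) :=
    { toFun := fun C => ⟨B ∘ₗ (C : V →ₗ[ℂ] V), hmem C⟩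
      map_add' := fun C D => by
        apply Subtype.ext
        ext u v
        simp
      map_smul' := fun c C => by
        apply Subtype.ext
        ext u v
        simp } with hT
  have hTbij : Function.Bijective T := by
    constructor
    · intro C D h
      apply Subtype.ext
      apply LinearMap.ext
      intro u
      apply hBinj
      have := congrArg (fun z : ↥(SInvForms P) =>
        (z : V →ₗ[ℂ] V →ₗ[ℂ] ℂ) u) h
      exact this
    · rintro ⟨Φ, hs, hi⟩
      set C0 : V →ₗ[ℂ] V := (e.symm : (V →ₗ[ℂ] ℂ) →ₗ[ℂ] V) ∘ₗ Φ with hC0def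
      have hC0 : ∀ u, B (C0 u) = Φ u := fun u => by
        have : B (C0 u) = e (e.symm (Φ u)) := rfl
        rw [this, e.apply_symm_apply]
      have hmemC : C0 ∈ autAlg B P := by
        constructor
        · intro v
          apply hBinj
          apply LinearMap.ext
          intro w
          rw [hC0 (P v), hPsa (C0 v) w, hC0 v]
          exact hi v w
        · intro u v
          have h1 : B (C0 u) v = Φ u v := by rw [hC0 u]
          have h2 : B u (C0 v) = -Φ u v := by
            rw [hskew u (C0 v), hC0 v, hs]
          rw [h1, h2, add_neg_cancel]
      refine ⟨⟨C0, hmemC⟩, ?_⟩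
      apply Subtype.ext
      apply LinearMap.ext
      intro u
      exact hC0 u
  exact (LinearEquiv.ofBijective T hTbij).finrank_eq

lemma sum_ite_range {M c : ℕ} (h : c ≤ M) (f : ℕ → ℕ) :
    ∑ k ∈ Finset.range M, (if k < c then f k else 0) = ∑ k ∈ Finset.range c, f k := by
  have h1 : ∑ k ∈ Finset.range c, (if k < c then f k else 0)
      = ∑ k ∈ Finset.range M, (if k < c then f k else 0) :=
    Finset.sum_subset (Finset.range_subset_range.2 h)
      (fun x _ hx => if_neg (fun hlt => hx (Finset.mem_range.2 hlt)))
  rw [← h1]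
  exact Finset.sum_congr rfl fun k hk => if_pos (Finset.mem_range.1 hk)

lemma sum_odd (t : ℕ) : ∑ j ∈ Finset.range t, (4 * j + 3) = t * (2 * t + 1) := by
  induction t with
  | zero => simp
  | succ t ih => rw [Finset.sum_range_succ, ih]; ring

lemma tf_double (c : ℕ) : Tf (2 * c) = c * (2 * c + 1) := by
  rw [Tf, show 2 * c * (2 * c + 1) = c * (2 * c + 1) * 2 by ring]
  exact Nat.mul_div_cancel _ (by norm_num)

/-- number of parts exceeding `k` -/
def tcount (N : ℕ) (n : Fin N → ℕ) (k : ℕ) : ℕ := ∑ j : Fin N, if k < n j then 1 else 0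

section Count

variable {N : ℕ} {n : Fin N → ℕ} (hmono : ∀ i j : Fin N, i ≤ j → n j ≤ n i)

lemma tcount_le (k : ℕ) : tcount N n k ≤ N := by
  calc tcount N n k ≤ ∑ _j : Fin N, 1 :=
        Finset.sum_le_sum (fun j _ => by split_ifs <;> omega)
  _ = N := by simp

include hmono in
lemma tcount_dual (k : ℕ) (j : Fin N) : k < n j ↔ (j : ℕ) < tcount N n k := by
  constructor
  · intro hk
    have hle : ∑ i : Fin N, (if (i : ℕ) < (j : ℕ) + 1 then 1 else 0) ≤ tcount N n k := by
      apply Finset.sum_le_sum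
      intro i _
      split_ifs with h1 h2
      · omega
      · exfalso
        have := hmono i j (Fin.le_def.2 (by omega))
        omega
      · omega
      · omega
    have hcount : ∑ i : Fin N, (if (i : ℕ) < (j : ℕ) + 1 then 1 else 0) = (j : ℕ) + 1 := by
      rw [Fin.sum_univ_eq_sum_range (fun i => if i < (j : ℕ) + 1 then 1 else 0) N,
        sum_ite_range (by omega) (fun _ => 1)]
      simp
    omega
  · intro hj
    by_contra hc
    push_neg at hc
    have hle : tcount N n k ≤ ∑ i : Fin N, (if (i : ℕ) < (j : ℕ) then 1 else 0) := by
      apply Finset.sum_le_sum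
      intro i _
      split_ifs with h1 h2
      · omega
      · exfalso
        have := hmono j i (Fin.le_def.2 (by omega))
        omega
      · omega
      · omega
    have hcount : ∑ i : Fin N, (if (i : ℕ) < (j : ℕ) then 1 else 0) = (j : ℕ) := by
      rw [Fin.sum_univ_eq_sum_range (fun i => if i < (j : ℕ) then 1 else 0) N,
        sum_ite_range (by omega) (fun _ => 1)]
      simp
    omega

end Count

/-- **Dimension of the automorphism Lie algebra (P. Zhang).**
If `(V, B, P)` is the direct sum of Jordan blocks `J_{0,2n_1}, …, J_{0,2n_N}` with
`n_1 ≥ … ≥ n_N ≥ 1`, then the Lie algebra `g` of the automorphism group satisfies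
`dim g = Σ_{j=1}^N (4j − 1) n_j`. -/
theorem dim_autAlg_jordan
    {V : Type*} [AddCommGroup V] [Module ℂ V] [FiniteDimensional ℂ V]
    (B : V →ₗ[ℂ] V →ₗ[ℂ] ℂ)
    (hBalt : ∀ v, B v v = 0)
    (hBnd : ∀ v, (∀ u, B v u = 0) → v = 0)
    (P : V →ₗ[ℂ] V)
    (hPsa : ∀ u v, B (P u) v = B u (P v))
    (hPnil : IsNilpotent P)
    (N : ℕ) (n : Fin N → ℕ)
    (hmono : ∀ i j : Fin N, i ≤ j → n j ≤ n i)
    (hpos : ∀ j, 1 ≤ n j)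
    (hJ : ∀ k : ℕ, finrank ℂ (LinearMap.ker (P ^ k)) = 2 * ∑ j : Fin N, min k (n j)) :
    finrank ℂ (autAlg B P) = ∑ j : Fin N, (4 * ((j : ℕ) + 1) - 1) * n j := by
  classical
  obtain ⟨m, hm⟩ := hPnil
  have hm1 : P ^ (m + 1) = 0 := by rw [pow_succ, hm, zero_mul]
  have hkertop : ∀ {l : ℕ}, P ^ l = 0 → finrank ℂ (ker (P ^ l)) = finrank ℂ V := by
    intro l hl
    rw [hl, LinearMap.ker_zero]
    exact finrank_top ℂ V
  have hnm : ∀ j, n j ≤ m := by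
    intro j
    by_contra hc
    push_neg at hc
    have e1 := hJ m
    have e2 := hJ (m + 1)
    rw [hkertop hm] at e1
    rw [hkertop hm1] at e2
    have hlt : ∑ j : Fin N, min m (n j) < ∑ j : Fin N, min (m + 1) (n j) :=
      Finset.sum_lt_sum (fun i _ => by omega) ⟨j, Finset.mem_univ j, by omega⟩
    omega
  -- step counts
  have hck : ∀ k, finrank ℂ (ker (P ^ (k + 1))) - finrank ℂ (ker (P ^ k))
      = 2 * tcount N n k := by
    intro k
    have e1 := hJ k
    have e2 := hJ (k + 1)
    have hstep : ∑ j : Fin N, min (k + 1) (n j)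
        = (∑ j : Fin N, min k (n j)) + tcount N n k := by
      simp only [tcount]
      rw [← Finset.sum_add_distrib]
      exact Finset.sum_congr rfl fun j _ => by split_ifs <;> omega
    omega
  rw [finrank_autAlg_eq B hBalt hBnd P hPsa, dim_sinv m P hm]
  have step1 : ∀ k, Tf (finrank ℂ (ker (P ^ (k + 1))) - finrank ℂ (ker (P ^ k)))
      = tcount N n k * (2 * tcount N n k + 1) := fun k => by
    rw [hck k, tf_double]
  calc ∑ k ∈ Finset.range m,
        Tf (finrank ℂ (ker (P ^ (k + 1))) - finrank ℂ (ker (P ^ k)))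
      = ∑ k ∈ Finset.range m, tcount N n k * (2 * tcount N n k + 1) :=
        Finset.sum_congr rfl fun k _ => step1 k
    _ = ∑ k ∈ Finset.range m, ∑ j ∈ Finset.range (tcount N n k), (4 * j + 3) :=
        Finset.sum_congr rfl fun k _ => (sum_odd _).symm
    _ = ∑ k ∈ Finset.range m, ∑ j : Fin N,
          (if (j : ℕ) < tcount N n k then 4 * (j : ℕ) + 3 else 0) := by
        refine Finset.sum_congr rfl fun k _ => ?_
        rw [Fin.sum_univ_eq_sum_range
          (fun j => if j < tcount N n k then 4 * j + 3 else 0) N,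
          sum_ite_range (tcount_le k) (fun j => 4 * j + 3)]
    _ = ∑ k ∈ Finset.range m, ∑ j : Fin N,
          (if k < n j then 4 * (j : ℕ) + 3 else 0) := by
        refine Finset.sum_congr rfl fun k _ => Finset.sum_congr rfl fun j _ => ?_
        exact if_congr (tcount_dual hmono k j).symm rfl rfl
    _ = ∑ j : Fin N, ∑ k ∈ Finset.range m,
          (if k < n j then 4 * (j : ℕ) + 3 else 0) := Finset.sum_comm
    _ = ∑ j : Fin N, (4 * (j : ℕ) + 3) * n j := by
        refine Finset.sum_congr rfl fun j _ => ?_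
        have : ∀ k, (if k < n j then 4 * (j : ℕ) + 3 else 0)
            = (4 * (j : ℕ) + 3) * (if k < n j then 1 else 0) := fun k => by
          split_ifs <;> omega
        rw [Finset.sum_congr rfl fun k _ => this k, ← Finset.mul_sum,
          sum_ite_range (hnm j) (fun _ => 1)]
        simp
    _ = ∑ j : Fin N, (4 * ((j : ℕ) + 1) - 1) * n j :=
        Finset.sum_congr rfl fun j _ => by
          have : 4 * (j : ℕ) + 3 = 4 * ((j : ℕ) + 1) - 1 := by omega
          rw [this]
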